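/- Let D, n, L ≥ 1, let 𝒟_U be a probability distribution on ℝ^D all of whose moments are finite, and let g : ℝ^D → ℝ be measurable of at most polynomial growth. Draw u_1, …, u_{n+1} i.i.d. from 𝒟_U and set v_i = g(u_i). Form the prompt ζ ∈ ℝ^{(D+1)×(n+1)} whose i-th column is (u_i, v_i) for i ≤ n and whose last column is (u_{n+1}, 0). Then for every L-layer linear Transformer with arbitrary weights, its prediction v̂ (the (D+1, n+1) entry of the output ζ^(L)) satisfies E[(v̂ + v_{n+1})²] ≥ inf_{β ∈ ℝ^D} E[(⟨u_{n+1}, β⟩ + v_{n+1})²]. -/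

import Mathlib

open MeasureTheory ProbabilityTheory Matrix

noncomputable section

/-- The mask `M = diag(I_n, 0)`. -/
def attnMask (n : ℕ) : Matrix (Fin (n + 1)) (Fin (n + 1)) ℝ :=
  Matrix.diagonal fun i => if i = Fin.last n then 0 else 1

/-- A linear self-attention layer with weights `P, Q`. -/
def attn (D n : ℕ) (P Q : Matrix (Fin (D + 1)) (Fin (D + 1)) ℝ)
    (Z : Matrix (Fin (D + 1)) (Fin (n + 1)) ℝ) : Matrix (Fin (D + 1)) (Fin (n + 1)) ℝ :=
  Z + (n : ℝ)⁻¹ • (P * Z * attnMask n * (Zᵀ * Q * Z))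

/-- An `L`-layer linear Transformer. -/
def TFlin (D n : ℕ)
    (wts : List (Matrix (Fin (D + 1)) (Fin (D + 1)) ℝ × Matrix (Fin (D + 1)) (Fin (D + 1)) ℝ))
    (Z : Matrix (Fin (D + 1)) (Fin (n + 1)) ℝ) : Matrix (Fin (D + 1)) (Fin (n + 1)) ℝ :=
  wts.foldl (fun W pq => attn D n pq.1 pq.2 W) Z

/-- Prompt whose `i`-th column is `(u_i, v_i)` for `i ≤ n` and last column `(u_{n+1}, 0)`. -/
def promptU (D n : ℕ) (u : Fin (n + 1) → Fin D → ℝ) (v : Fin n → ℝ) :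
    Matrix (Fin (D + 1)) (Fin (n + 1)) ℝ :=
  Matrix.of fun i j =>
    if hi : (i : ℕ) < D then u j ⟨(i : ℕ), hi⟩
    else if hj : (j : ℕ) < n then v ⟨(j : ℕ), hj⟩ else 0

/-- auxiliary: one step multiplier -/
def Sstep (D n : ℕ) (P Q : Matrix (Fin (D + 1)) (Fin (D + 1)) ℝ)
    (Y : Matrix (Fin (D + 1)) (Fin (n + 1)) ℝ) : Matrix (Fin (D + 1)) (Fin (D + 1)) ℝ :=
  1 + (n : ℝ)⁻¹ • (P * Y * Yᵀ * Q)

def Gfun (D n : ℕ) :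
    List (Matrix (Fin (D + 1)) (Fin (D + 1)) ℝ × Matrix (Fin (D + 1)) (Fin (D + 1)) ℝ) →
    Matrix (Fin (D + 1)) (Fin (n + 1)) ℝ → Matrix (Fin (D + 1)) (Fin (D + 1)) ℝ
  | [], _ => 1
  | pq :: rest, Y => Gfun D n rest (Sstep D n pq.1 pq.2 Y * Y) * Sstep D n pq.1 pq.2 Y

lemma attnMask_mul_self (n : ℕ) : attnMask n * attnMask n = attnMask n := by
  simp only [attnMask, Matrix.diagonal_mul_diagonal]
  ext i j
  rcases eq_or_ne i j with rfl | h
  · by_cases h : i = Fin.last n <;> simp [Matrix.diagonal_apply_eq, h]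
  · simp [Matrix.diagonal_apply_ne _ h]

lemma attnMask_transpose (n : ℕ) : (attnMask n)ᵀ = attnMask n := by
  simp [attnMask]

lemma attn_eq (D n : ℕ) (P Q : Matrix (Fin (D + 1)) (Fin (D + 1)) ℝ)
    (Z : Matrix (Fin (D + 1)) (Fin (n + 1)) ℝ) :
    attn D n P Q Z = Sstep D n P Q (Z * attnMask n) * Z := by
  unfold attn Sstep
  rw [Matrix.add_mul, Matrix.one_mul, Matrix.smul_mul, Matrix.transpose_mul, attnMask_transpose]
  simp only [Matrix.mul_assoc]
  rw [← Matrix.mul_assoc (attnMask n) (attnMask n), attnMask_mul_self]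

lemma TFlin_eq (D n : ℕ) (l : List _) (Z : Matrix (Fin (D + 1)) (Fin (n + 1)) ℝ) :
    TFlin D n l Z = Gfun D n l (Z * attnMask n) * Z := by
  induction l generalizing Z with
  | nil => simp [TFlin, Gfun]
  | cons pq rest ih =>
    have h1 : TFlin D n (pq :: rest) Z = TFlin D n rest (attn D n pq.1 pq.2 Z) := rfl
    rw [h1, ih, attn_eq, Matrix.mul_assoc _ Z (attnMask n), Gfun, Matrix.mul_assoc]

/-- Masked prompt, as a function of the first `n` samples. -/
def Ym (D n : ℕ) (g : (Fin D → ℝ) → ℝ) (w : Fin n → Fin D → ℝ) :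
    Matrix (Fin (D + 1)) (Fin (n + 1)) ℝ :=
  Matrix.of fun i j =>
    if hj : (j : ℕ) < n then
      (if hi : (i : ℕ) < D then w ⟨j, hj⟩ ⟨i, hi⟩ else g (w ⟨j, hj⟩)) else 0

lemma promptU_mask (D n : ℕ) (g : (Fin D → ℝ) → ℝ) (u : Fin (n + 1) → Fin D → ℝ) :
    promptU D n u (fun i => g (u i.castSucc)) * attnMask n
      = Ym D n g (fun j => u j.castSucc) := by
  ext i j
  rw [attnMask, Matrix.mul_diagonal]
  by_cases hj : (j : ℕ) < n
  · have hne : j ≠ Fin.last n := by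
      intro h; rw [h] at hj; simp [Fin.last] at hj
    have hcs : (⟨(j : ℕ), hj⟩ : Fin n).castSucc = j := by
      ext; simp
    by_cases hi : (i : ℕ) < D <;> simp [promptU, Ym, hj, hne, hi, hcs]
  · have hj' : j = Fin.last n := by
      ext; simp [Fin.last]; omega
    simp [hj', Ym]

def Bvec (D n : ℕ)
    (l : List (Matrix (Fin (D + 1)) (Fin (D + 1)) ℝ × Matrix (Fin (D + 1)) (Fin (D + 1)) ℝ))
    (g : (Fin D → ℝ) → ℝ) (w : Fin n → Fin D → ℝ) : Fin D → ℝ :=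
  fun j => Gfun D n l (Ym D n g w) (Fin.last D) j.castSucc

lemma pred_eq (D n : ℕ)
    (l : List (Matrix (Fin (D + 1)) (Fin (D + 1)) ℝ × Matrix (Fin (D + 1)) (Fin (D + 1)) ℝ))
    (g : (Fin D → ℝ) → ℝ) (u : Fin (n + 1) → Fin D → ℝ) :
    TFlin D n l (promptU D n u (fun i => g (u i.castSucc))) (Fin.last D) (Fin.last n)
      = u (Fin.last n) ⬝ᵥ Bvec D n l g (fun j => u j.castSucc) := by
  rw [TFlin_eq, promptU_mask, Matrix.mul_apply, Fin.sum_univ_castSucc]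
  have hlast : promptU D n u (fun i => g (u i.castSucc)) (Fin.last D) (Fin.last n) = 0 := by
    simp [promptU, Fin.last]
  rw [hlast, mul_zero, add_zero]
  unfold dotProduct Bvec
  apply Finset.sum_congr rfl
  intro j _
  have h1 : promptU D n u (fun i => g (u i.castSucc)) (Fin.castSucc j) (Fin.last n)
      = u (Fin.last n) j := by
    have hjD : ((Fin.castSucc j : Fin (D + 1)) : ℕ) < D := j.isLt
    simp [promptU, hjD]
  rw [h1, mul_comm]

lemma continuous_Sstep (D n : ℕ) (P Q : Matrix (Fin (D + 1)) (Fin (D + 1)) ℝ) :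
    Continuous (Sstep D n P Q) := by
  unfold Sstep
  exact continuous_const.add
    ((continuous_const_smul ((n : ℝ)⁻¹)).comp (((continuous_const.matrix_mul continuous_id).matrix_mul
      continuous_id.matrix_transpose).matrix_mul continuous_const) :
      Continuous fun Y : Matrix (Fin (D + 1)) (Fin (n + 1)) ℝ => (n : ℝ)⁻¹ • (P * Y * Yᵀ * Q))

lemma continuous_Gfun (D n : ℕ) (l : List _) : Continuous (Gfun D n l) := by
  induction l with
  | nil => exact continuous_const
  | cons pq rest ih =>
    show Continuous fun Y => Gfun D n rest (Sstep D n pq.1 pq.2 Y * Y) * Sstep D n pq.1 pq.2 Y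
    exact (ih.comp ((continuous_Sstep D n pq.1 pq.2).matrix_mul continuous_id)).matrix_mul
      (continuous_Sstep D n pq.1 pq.2)

instance matrixMS {lt mt : Type*} : MeasurableSpace (Matrix lt mt ℝ) :=
  (inferInstance : MeasurableSpace (lt → mt → ℝ))

instance matrixBorel {lt mt : Type*} [Countable lt] [Countable mt] :
    BorelSpace (Matrix lt mt ℝ) :=
  (inferInstance : BorelSpace (lt → mt → ℝ))

lemma measurable_Ym (D n : ℕ) {g : (Fin D → ℝ) → ℝ} (hg : Measurable g) :
    Measurable (Ym D n g) := by
  apply measurable_pi_lambda; intro i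
  apply measurable_pi_lambda; intro j
  by_cases hj : (j : ℕ) < n
  · by_cases hi : (i : ℕ) < D
    · simpa [Ym, hj, hi, Function.comp_def] using
        ((measurable_pi_apply _).comp (measurable_pi_apply (⟨(j : ℕ), hj⟩ : Fin n)) :
          Measurable fun w : Fin n → Fin D → ℝ => w ⟨(j : ℕ), hj⟩ ⟨(i : ℕ), hi⟩)
    · simpa [Ym, hj, hi, Function.comp_def] using hg.comp (measurable_pi_apply (⟨(j : ℕ), hj⟩ : Fin n))
  · simpa [Ym, hj] using (measurable_const : Measurable fun _ : Fin n → Fin D → ℝ => (0 : ℝ))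

lemma measurable_Bvec (D n : ℕ) (l : List _) {g : (Fin D → ℝ) → ℝ} (hg : Measurable g) :
    Measurable (Bvec D n l g) := by
  apply measurable_pi_lambda; intro j
  have h : Measurable fun w => Gfun D n l (Ym D n g w) :=
    (continuous_Gfun D n l).measurable.comp (measurable_Ym D n hg)
  exact (measurable_pi_apply j.castSucc).comp ((measurable_pi_apply (Fin.last D)).comp h)

lemma mul_apply_abs_le {l m o : Type*} [Fintype m] (A : Matrix l m ℝ) (B : Matrix m o ℝ)
    {a b : ℝ} (ha0 : 0 ≤ a) (hb0 : 0 ≤ b) (ha : ∀ i j, |A i j| ≤ a) (hb : ∀ i j, |B i j| ≤ b)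
    (i : l) (j : o) : |(A * B) i j| ≤ (Fintype.card m) * a * b := by
  rw [Matrix.mul_apply]
  calc |∑ k, A i k * B k j| ≤ ∑ k, |A i k * B k j| := Finset.abs_sum_le_sum_abs _ _
    _ ≤ ∑ _k : m, a * b := Finset.sum_le_sum fun k _ => by
        rw [abs_mul]; exact mul_le_mul (ha i k) (hb k j) (abs_nonneg _) ha0
    _ = (Fintype.card m) * a * b := by
        rw [Finset.sum_const, Finset.card_univ, nsmul_eq_mul, mul_assoc]

/-- crude entrywise bound for a fixed matrix -/
def pbound {l m : Type*} [Fintype l] [Fintype m] (A : Matrix l m ℝ) : ℝ :=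
  ∑ i, ∑ j, |A i j|

lemma pbound_nonneg {l m : Type*} [Fintype l] [Fintype m] (A : Matrix l m ℝ) :
    0 ≤ pbound A :=
  Finset.sum_nonneg fun _ _ => Finset.sum_nonneg fun _ _ => abs_nonneg _

lemma abs_le_pbound {l m : Type*} [Fintype l] [Fintype m] (A : Matrix l m ℝ) (i : l) (j : m) :
    |A i j| ≤ pbound A := by
  calc |A i j| ≤ ∑ j', |A i j'| :=
        Finset.single_le_sum (fun j' _ => abs_nonneg (A i j')) (Finset.mem_univ j)
    _ ≤ pbound A :=
        Finset.single_le_sum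
          (fun i' _ => Finset.sum_nonneg fun j' _ => abs_nonneg (A i' j')) (Finset.mem_univ i)

lemma Sstep_bound (D n : ℕ) (P Q : Matrix (Fin (D + 1)) (Fin (D + 1)) ℝ) :
    ∃ c1 : ℝ, 1 ≤ c1 ∧ ∀ (Y : Matrix (Fin (D + 1)) (Fin (n + 1)) ℝ) (a : ℝ), 1 ≤ a →
      (∀ i j, |Y i j| ≤ a) → ∀ i j, |Sstep D n P Q Y i j| ≤ c1 * a ^ 2 := by
  set K : ℝ := (n : ℝ)⁻¹ * ((D + 1) * ((n + 1) * ((D + 1) * pbound P * 1) * 1) * pbound Q)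
    with hK
  have hP := pbound_nonneg P
  have hQ := pbound_nonneg Q
  have hK0 : 0 ≤ K := by
    have : (0:ℝ) ≤ (n : ℝ)⁻¹ := by positivity
    positivity
  refine ⟨1 + K, by linarith, fun Y a ha hY i j => ?_⟩
  have ha0 : (0:ℝ) ≤ a := by linarith
  have hPa : (0:ℝ) ≤ (D + 1 : ℝ) * pbound P * a := by positivity
  have h1 : ∀ i j, |(P * Y) i j| ≤ (D + 1 : ℝ) * pbound P * a := by
    intro i j
    simpa [Fintype.card_fin] using
      mul_apply_abs_le P Y hP ha0 (abs_le_pbound P) hY i j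
  have h2 : ∀ i j, |(P * Y * Yᵀ) i j| ≤ (n + 1 : ℝ) * ((D + 1 : ℝ) * pbound P * a) * a := by
    intro i j
    simpa [Fintype.card_fin] using
      mul_apply_abs_le (P * Y) Yᵀ hPa ha0 h1 (fun i j => hY j i) i j
  have h2' : (0:ℝ) ≤ (n + 1 : ℝ) * ((D + 1 : ℝ) * pbound P * a) * a := by positivity
  have h3 : ∀ i j, |(P * Y * Yᵀ * Q) i j|
      ≤ (D + 1 : ℝ) * ((n + 1 : ℝ) * ((D + 1 : ℝ) * pbound P * a) * a) * pbound Q := by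
    intro i j
    simpa [Fintype.card_fin] using
      mul_apply_abs_le (P * Y * Yᵀ) Q h2' hQ h2 (abs_le_pbound Q) i j
  have hSij : |Sstep D n P Q Y i j| ≤ 1 + K * a ^ 2 := by
    have hone : |(1 : Matrix (Fin (D + 1)) (Fin (D + 1)) ℝ) i j| ≤ 1 := by
      rw [Matrix.one_apply]
      split <;> simp
    have := h3 i j
    have hinv : (0:ℝ) ≤ (n : ℝ)⁻¹ := by positivity
    have heq : Sstep D n P Q Y i j
        = (1 : Matrix (Fin (D + 1)) (Fin (D + 1)) ℝ) i j
          + (((n : ℝ)⁻¹ • (P * Y * Yᵀ * Q) : Matrix (Fin (D + 1)) (Fin (D + 1)) ℝ)) i j := rfl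
    calc |Sstep D n P Q Y i j|
        ≤ |(1 : Matrix (Fin (D + 1)) (Fin (D + 1)) ℝ) i j|
          + |(((n : ℝ)⁻¹ • (P * Y * Yᵀ * Q) : Matrix (Fin (D + 1)) (Fin (D + 1)) ℝ)) i j| :=
          heq ▸ abs_add_le _ _
      _ ≤ 1 + K * a ^ 2 := by
          apply add_le_add hone
          rw [Matrix.smul_apply, smul_eq_mul, abs_mul, abs_of_nonneg hinv]
          have := mul_le_mul_of_nonneg_left (h3 i j) hinv
          calc (n : ℝ)⁻¹ * |(P * Y * Yᵀ * Q) i j|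
              ≤ (n : ℝ)⁻¹ * ((D + 1 : ℝ) * ((n + 1 : ℝ) * ((D + 1 : ℝ) * pbound P * a) * a)
                  * pbound Q) := this
            _ = K * a ^ 2 := by rw [hK]; ring
  have h1a : (1:ℝ) ≤ a ^ 2 := by nlinarith
  calc |Sstep D n P Q Y i j| ≤ 1 + K * a ^ 2 := hSij
    _ ≤ (1 + K) * a ^ 2 := by nlinarith

lemma Gfun_bound (D n : ℕ) (l : List _) :
    ∃ c : ℝ, 1 ≤ c ∧ ∃ m : ℕ, ∀ (Y : Matrix (Fin (D + 1)) (Fin (n + 1)) ℝ) (a : ℝ), 1 ≤ a →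
      (∀ i j, |Y i j| ≤ a) → ∀ i j, |Gfun D n l Y i j| ≤ c * a ^ m := by
  induction l with
  | nil =>
    refine ⟨1, le_refl 1, 0, fun Y a ha hY i j => ?_⟩
    show |(1 : Matrix (Fin (D + 1)) (Fin (D + 1)) ℝ) i j| ≤ 1 * a ^ 0
    rw [Matrix.one_apply, one_mul, pow_zero]
    split <;> simp
  | cons pq rest ih =>
    obtain ⟨c, hc, m, hm⟩ := ih
    obtain ⟨c1, hc1, hS⟩ := Sstep_bound D n pq.1 pq.2
    refine ⟨(D + 1 : ℝ) * (c * ((D + 1 : ℝ) * c1) ^ m) * c1, ?_, 3 * m + 2,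
      fun Y a ha hY i j => ?_⟩
    · have hn0 : (0:ℝ) ≤ (n : ℝ) := Nat.cast_nonneg n
      have hD0' : (1:ℝ) ≤ (D + 1 : ℝ) := by
        have : (0:ℝ) ≤ (D : ℝ) := Nat.cast_nonneg D
        linarith
      have h1 : (1:ℝ) ≤ (D + 1 : ℝ) * c1 := by nlinarith
      have h2 : (1:ℝ) ≤ ((D + 1 : ℝ) * c1) ^ m := one_le_pow₀ h1
      have hD0 : (1:ℝ) ≤ (D + 1 : ℝ) := by
        have : (0:ℝ) ≤ (D : ℝ) := Nat.cast_nonneg D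
        linarith
      have t1 : (1:ℝ) ≤ c * ((D + 1 : ℝ) * c1) ^ m := by nlinarith
      have t2 : (1:ℝ) ≤ (D + 1 : ℝ) * (c * ((D + 1 : ℝ) * c1) ^ m) := by nlinarith
      nlinarith
    · have hn0 : (0:ℝ) ≤ (n : ℝ) := Nat.cast_nonneg n
      have ha0 : (0:ℝ) ≤ a := by linarith
      have hSb := hS Y a ha hY
      set a' : ℝ := (D + 1 : ℝ) * c1 * a ^ 3 with ha'
      have ha3 : (1:ℝ) ≤ a ^ 3 := one_le_pow₀ ha
      have ha'1 : (1:ℝ) ≤ a' := by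
        have hD0' : (1:ℝ) ≤ (D + 1 : ℝ) := by
          have : (0:ℝ) ≤ (D : ℝ) := Nat.cast_nonneg D
          linarith
        have h1 : (1:ℝ) ≤ (D + 1 : ℝ) * c1 := by nlinarith
        rw [ha']; nlinarith
      have hc1a : (0:ℝ) ≤ c1 * a ^ 2 := by positivity
      have hSY : ∀ i j, |(Sstep D n pq.1 pq.2 Y * Y) i j| ≤ a' := by
        intro i j
        have h := mul_apply_abs_le (Sstep D n pq.1 pq.2 Y) Y hc1a ha0 hSb hY i j
        have heq : ((Fintype.card (Fin (D + 1)) : ℝ)) * (c1 * a ^ 2) * a = a' := by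
          rw [ha', Fintype.card_fin]; push_cast; ring
        linarith [heq ▸ h]
      have hGb := hm (Sstep D n pq.1 pq.2 Y * Y) a' ha'1 hSY
      have hca' : (0:ℝ) ≤ c * a' ^ m := by positivity
      have hfin := mul_apply_abs_le (Gfun D n rest (Sstep D n pq.1 pq.2 Y * Y))
        (Sstep D n pq.1 pq.2 Y) hca' hc1a hGb hSb i j
      have heq2 : ((Fintype.card (Fin (D + 1)) : ℝ)) * (c * a' ^ m) * (c1 * a ^ 2)
          = (D + 1 : ℝ) * (c * ((D + 1 : ℝ) * c1) ^ m) * c1 * a ^ (3 * m + 2) := by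
        rw [ha', Fintype.card_fin, mul_pow, ← pow_mul, pow_add]
        push_cast; ring
      have hfin' := heq2 ▸ hfin
      exact hfin'

lemma one_add_pow_le (t : ℝ) (ht : 0 ≤ t) (e : ℕ) : (1 + t) ^ e ≤ 2 ^ e * (1 + t ^ e) := by
  rcases le_total t 1 with h | h
  · have h1 : (1 + t) ^ e ≤ 2 ^ e := pow_le_pow_left₀ (by linarith) (by linarith) e
    have h2 : (0:ℝ) ≤ t ^ e := pow_nonneg ht e
    have h3 : (0:ℝ) < 2 ^ e := by positivity
    nlinarith
  · have h1 : (1 + t) ^ e ≤ (2 * t) ^ e := pow_le_pow_left₀ (by linarith) (by linarith) e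
    have h2 : (0:ℝ) < 2 ^ e := by positivity
    have h3 : (0:ℝ) ≤ t ^ e := pow_nonneg ht e
    calc (1 + t) ^ e ≤ (2 * t) ^ e := h1
      _ = 2 ^ e * t ^ e := mul_pow 2 t e
      _ ≤ 2 ^ e * (1 + t ^ e) := by nlinarith

lemma integrable_prod_pi {N : ℕ} {E : Type*} [MeasurableSpace E] (μ : Measure E)
    [IsProbabilityMeasure μ] {f : E → ℝ} (hfi : Integrable f μ) :
    Integrable (fun x : Fin N → E => ∏ j, f (x j)) (Measure.pi fun _ : Fin N => μ) := by
  induction N with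
  | zero =>
    simpa using (integrable_const (1 : ℝ) :
      Integrable (fun _ : Fin 0 → E => (1:ℝ)) (Measure.pi fun _ : Fin 0 => μ))
  | succ N ih =>
    have hmp := measurePreserving_piFinSuccAbove (fun _ : Fin (N + 1) => μ) 0
    set e := MeasurableEquiv.piFinSuccAbove (fun _ : Fin (N + 1) => E) 0
    set F : E × (Fin N → E) → ℝ := fun p => f p.1 * ∏ j, f (p.2 j) with hF
    have hFint : Integrable F ((μ).prod (Measure.pi fun _ : Fin N => μ)) :=
      Integrable.mul_prod hfi ih
    have hcomp : (fun x : Fin (N + 1) → E => ∏ j, f (x j)) = F ∘ e := by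
      funext x
      show ∏ j, f (x j) = f (x 0) * ∏ j : Fin N, f (x ((0 : Fin (N+1)).succAbove j))
      rw [Fin.prod_univ_succ]
      simp [Fin.succAbove_zero]
    rw [hcomp]
    exact (hmp.integrable_comp_emb e.measurableEmbedding).mpr hFint


lemma one_le_prod_real {ι : Type*} [Fintype ι] (f : ι → ℝ) (hf : ∀ i, 1 ≤ f i) :
    1 ≤ ∏ i, f i := by
  calc (1:ℝ) = ∏ _i : ι, (1:ℝ) := Finset.prod_const_one.symm
    _ ≤ ∏ i, f i := Finset.prod_le_prod (fun _ _ => zero_le_one) (fun i _ => hf i)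

lemma single_le_prod_real {ι : Type*} [Fintype ι] [DecidableEq ι] (f : ι → ℝ) (hf : ∀ i, 1 ≤ f i) (j : ι) :
    f j ≤ ∏ i, f i := by
  rw [← Finset.mul_prod_erase Finset.univ f (Finset.mem_univ j)]
  have h1 : (1:ℝ) ≤ ∏ i ∈ Finset.univ.erase j, f i :=
    calc (1:ℝ) = ∏ _i ∈ Finset.univ.erase j, (1:ℝ) := Finset.prod_const_one.symm
      _ ≤ _ := Finset.prod_le_prod (fun _ _ => zero_le_one) (fun i _ => hf i)
  exact le_mul_of_one_le_right (by linarith [hf j]) h1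

set_option maxHeartbeats 1600000 in
/-- for i.i.d. inputs from an arbitrary distribution with all moments finite
and labels from a fixed target of polynomial growth, no deep linear Transformer beats the
best linear predictor. -/
theorem stmt1 (D n L : ℕ) (hD : 1 ≤ D) (hn : 1 ≤ n) (hL : 1 ≤ L)
    (μ : Measure (Fin D → ℝ)) [IsProbabilityMeasure μ]
    (hmom : ∀ k : ℕ, Integrable (fun u => ‖u‖ ^ k) μ)
    (g : (Fin D → ℝ) → ℝ) (hg : Measurable g)
    (C : ℝ) (k : ℕ) (hgrowth : ∀ u, |g u| ≤ C * (1 + ‖u‖) ^ k)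
    (wts : Fin L → Matrix (Fin (D + 1)) (Fin (D + 1)) ℝ × Matrix (Fin (D + 1)) (Fin (D + 1)) ℝ) :
    (⨅ β : Fin D → ℝ,
        ∫ u : Fin (n + 1) → Fin D → ℝ,
          ((u (Fin.last n) ⬝ᵥ β) + g (u (Fin.last n))) ^ 2
          ∂(Measure.pi fun _ : Fin (n + 1) => μ))
      ≤ ∫ u : Fin (n + 1) → Fin D → ℝ,
          (TFlin D n (List.ofFn wts) (promptU D n u fun i => g (u i.castSucc))
              (Fin.last D) (Fin.last n)
            + g (u (Fin.last n))) ^ 2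
          ∂(Measure.pi fun _ : Fin (n + 1) => μ) := by
  classical
  set l := List.ofFn wts with hl
  set π : Measure (Fin (n + 1) → Fin D → ℝ) := Measure.pi fun _ : Fin (n + 1) => μ with hπ
  set ν : Measure (Fin n → Fin D → ℝ) := Measure.pi fun _ : Fin n => μ with hν
  haveI : IsProbabilityMeasure π := by rw [hπ]; infer_instance
  haveI : IsProbabilityMeasure ν := by rw [hν]; infer_instance
  set B : (Fin n → Fin D → ℝ) → Fin D → ℝ := Bvec D n l g with hB
  set H : (Fin (n + 1) → Fin D → ℝ) → ℝ :=
    fun u => (u (Fin.last n) ⬝ᵥ B (fun j => u j.castSucc) + g (u (Fin.last n))) ^ 2 with hH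
  have hC : 0 ≤ C := by
    have h0 := hgrowth 0
    have h1 : (0:ℝ) ≤ |g 0| := abs_nonneg _
    simp at h0
    linarith
  -- rewrite the RHS using the structural lemma
  have hRHS : (∫ u, (TFlin D n l (promptU D n u fun i => g (u i.castSucc))
      (Fin.last D) (Fin.last n) + g (u (Fin.last n))) ^ 2 ∂π) = ∫ u, H u ∂π := by
    apply integral_congr_ae
    apply ae_of_all
    intro u
    rw [hH]
    simp only
    rw [pred_eq]
  -- measurability of H
  have hrest : Measurable fun u : Fin (n + 1) → Fin D → ℝ => (fun j : Fin n => u j.castSucc) :=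
    measurable_pi_lambda _ fun j => measurable_pi_apply _
  have hBm : Measurable fun u : Fin (n + 1) → Fin D → ℝ => B (fun j => u j.castSucc) :=
    (measurable_Bvec D n l hg).comp hrest
  have hdotm : Measurable fun u : Fin (n + 1) → Fin D → ℝ =>
      u (Fin.last n) ⬝ᵥ B (fun j => u j.castSucc) := by
    apply Finset.measurable_sum
    intro i _
    exact ((measurable_pi_apply i).comp (measurable_pi_apply (Fin.last n))).mul
      ((measurable_pi_apply i).comp hBm)
  have hHm : Measurable H :=
    (hdotm.add (hg.comp (measurable_pi_apply (Fin.last n)))).pow_const 2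
  -- pointwise bound on H
  obtain ⟨c, hc1, m, hGb⟩ := Gfun_bound D n l
  set M : ℕ := (k + 1) * m + 1 + k with hM
  set K1 : ℝ := D * (c * (C + 1) ^ m) + C with hK1
  have hc0 : (0:ℝ) ≤ c := by linarith
  have hCp : (0:ℝ) ≤ (C + 1) ^ m := by positivity
  have hK1p : 0 ≤ K1 := by
    have : (0:ℝ) ≤ (D : ℝ) := Nat.cast_nonneg D
    have h2 : (0:ℝ) ≤ (D:ℝ) * (c * (C + 1) ^ m) := by positivity
    rw [hK1]; linarith
  have hHb : ∀ u : Fin (n + 1) → Fin D → ℝ,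
      H u ≤ (K1 ^ 2 * ((n:ℝ) + 1) ^ (2 * M)) * ∏ j, (1 + ‖u j‖) ^ (2 * M) := by
    intro u
    set s : ℝ := ∑ j : Fin (n + 1), (1 + ‖u j‖) with hs
    have hterm : ∀ j : Fin (n + 1), 1 + ‖u j‖ ≤ s :=
      fun j => Finset.single_le_sum (f := fun j : Fin (n+1) => 1 + ‖u j‖)
        (fun j' _ => by positivity) (Finset.mem_univ j)
    have hs1 : 1 ≤ s := by
      have := hterm (Fin.last n)
      have h2 : (0:ℝ) ≤ ‖u (Fin.last n)‖ := norm_nonneg _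
      linarith
    have hs0 : (0:ℝ) ≤ s := by linarith
    set a : ℝ := (C + 1) * s ^ (k + 1) with ha
    have hsk : 1 ≤ s ^ (k + 1) := one_le_pow₀ hs1
    have ha1 : 1 ≤ a := by rw [ha]; nlinarith
    have hnorm_le : ∀ j : Fin (n + 1), ‖u j‖ ≤ s := by
      intro j
      have := hterm j
      linarith
    have hY : ∀ i j, |Ym D n g (fun j => u j.castSucc) i j| ≤ a := by
      intro i j
      by_cases hj : (j : ℕ) < n
      · by_cases hi : (i : ℕ) < D
        · simp only [Ym, Matrix.of_apply, dif_pos hj, dif_pos hi]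
          have h1 : |u (Fin.castSucc ⟨(j:ℕ), hj⟩) ⟨(i:ℕ), hi⟩|
              ≤ ‖u (Fin.castSucc ⟨(j:ℕ), hj⟩)‖ := by
            simpa [Real.norm_eq_abs] using
              norm_le_pi_norm (u (Fin.castSucc ⟨(j:ℕ), hj⟩)) ⟨(i:ℕ), hi⟩
          have h2 : ‖u (Fin.castSucc ⟨(j:ℕ), hj⟩)‖ ≤ s := hnorm_le _
          have h3 : s ≤ s ^ (k + 1) := le_self_pow₀ hs1 (Nat.succ_ne_zero k)
          calc |u (Fin.castSucc ⟨(j:ℕ), hj⟩) ⟨(i:ℕ), hi⟩| ≤ s := le_trans h1 h2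
            _ ≤ s ^ (k + 1) := h3
            _ ≤ a := by rw [ha]; nlinarith
        · simp only [Ym, Matrix.of_apply, dif_pos hj, dif_neg hi]
          have h1 : |g (u (Fin.castSucc ⟨(j:ℕ), hj⟩))|
              ≤ C * (1 + ‖u (Fin.castSucc ⟨(j:ℕ), hj⟩)‖) ^ k := hgrowth _
          have h2 : (1 + ‖u (Fin.castSucc ⟨(j:ℕ), hj⟩)‖) ^ k ≤ s ^ k :=
            pow_le_pow_left₀ (by positivity) (hterm _) k
          have h3 : s ^ k ≤ s ^ (k + 1) := pow_le_pow_right₀ hs1 (Nat.le_succ k)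
          calc |g (u (Fin.castSucc ⟨(j:ℕ), hj⟩))| ≤ C * (1 + ‖_‖) ^ k := h1
            _ ≤ C * s ^ k := by nlinarith
            _ ≤ C * s ^ (k + 1) := by nlinarith
            _ ≤ a := by rw [ha]; nlinarith
      · simp only [Ym, Matrix.of_apply, dif_neg hj]
        rw [abs_zero]; linarith
    have hBb : ∀ i : Fin D, |B (fun j => u j.castSucc) i| ≤ c * a ^ m := by
      intro i
      exact hGb (Ym D n g (fun j => u j.castSucc)) a ha1 hY (Fin.last D) i.castSucc
    have hca : (0:ℝ) ≤ c * a ^ m := by positivity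
    have hdotb : |u (Fin.last n) ⬝ᵥ B (fun j => u j.castSucc)| ≤ (D:ℝ) * (s * (c * a ^ m)) := by
      have hle : ∀ i : Fin D, |u (Fin.last n) i * B (fun j => u j.castSucc) i|
          ≤ s * (c * a ^ m) := by
        intro i
        rw [abs_mul]
        have h1 : |u (Fin.last n) i| ≤ s := by
          have := norm_le_pi_norm (u (Fin.last n)) i
          have h2 := hnorm_le (Fin.last n)
          simp only [Real.norm_eq_abs] at this
          linarith
        exact mul_le_mul h1 (hBb i) (abs_nonneg _) hs0
      calc |∑ i, u (Fin.last n) i * B (fun j => u j.castSucc) i|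
          ≤ ∑ i, |u (Fin.last n) i * B (fun j => u j.castSucc) i| :=
            Finset.abs_sum_le_sum_abs _ _
        _ ≤ ∑ _i : Fin D, s * (c * a ^ m) := Finset.sum_le_sum fun i _ => hle i
        _ = (D:ℝ) * (s * (c * a ^ m)) := by
            rw [Finset.sum_const, Finset.card_univ, Fintype.card_fin, nsmul_eq_mul]
    have hexp : (D:ℝ) * (s * (c * a ^ m)) = (D:ℝ) * (c * (C + 1) ^ m) * s ^ ((k + 1) * m + 1) := by
      rw [ha, mul_pow, ← pow_mul]
      ring
    have he1M : (k + 1) * m + 1 ≤ M := by omega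
    have hkM : k ≤ M := by omega
    have hsM1 : s ^ ((k + 1) * m + 1) ≤ s ^ M := pow_le_pow_right₀ hs1 he1M
    have hsM2 : s ^ k ≤ s ^ M := pow_le_pow_right₀ hs1 hkM
    have hgb : |g (u (Fin.last n))| ≤ C * s ^ k := by
      have h1 := hgrowth (u (Fin.last n))
      have h2 : (1 + ‖u (Fin.last n)‖) ^ k ≤ s ^ k :=
        pow_le_pow_left₀ (by positivity) (hterm _) k
      nlinarith
    have habs : |u (Fin.last n) ⬝ᵥ B (fun j => u j.castSucc) + g (u (Fin.last n))|
        ≤ K1 * s ^ M := by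
      have h1 := abs_add_le (u (Fin.last n) ⬝ᵥ B (fun j => u j.castSucc)) (g (u (Fin.last n)))
      have h2 : |u (Fin.last n) ⬝ᵥ B (fun j => u j.castSucc)|
          ≤ (D:ℝ) * (c * (C + 1) ^ m) * s ^ M := by
        have := hexp ▸ hdotb
        have h3 : (0:ℝ) ≤ (D:ℝ) * (c * (C + 1) ^ m) := by positivity
        nlinarith
      have h4 : |g (u (Fin.last n))| ≤ C * s ^ M := by nlinarith
      rw [hK1]
      calc |u (Fin.last n) ⬝ᵥ B (fun j => u j.castSucc) + g (u (Fin.last n))|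
          ≤ |u (Fin.last n) ⬝ᵥ B (fun j => u j.castSucc)| + |g (u (Fin.last n))| := h1
        _ ≤ (D:ℝ) * (c * (C + 1) ^ m) * s ^ M + C * s ^ M := add_le_add h2 h4
        _ = ((D:ℝ) * (c * (C + 1) ^ m) + C) * s ^ M := by ring
    have hHu : H u ≤ K1 ^ 2 * s ^ (2 * M) := by
      have h1 : H u = |u (Fin.last n) ⬝ᵥ B (fun j => u j.castSucc) + g (u (Fin.last n))| ^ 2 := by
        rw [hH]; simp only [sq_abs]
      rw [h1]
      calc |u (Fin.last n) ⬝ᵥ B (fun j => u j.castSucc) + g (u (Fin.last n))| ^ 2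
          ≤ (K1 * s ^ M) ^ 2 := pow_le_pow_left₀ (abs_nonneg _) habs 2
        _ = K1 ^ 2 * s ^ (2 * M) := by rw [mul_pow, ← pow_mul, Nat.mul_comm M 2]
    have hsprod : s ≤ ((n:ℝ) + 1) * ∏ j, (1 + ‖u j‖) := by
      have hle : ∀ j : Fin (n + 1), 1 + ‖u j‖ ≤ ∏ j', (1 + ‖u j'‖) := by
        intro j
        exact single_le_prod_real (fun j' : Fin (n + 1) => 1 + ‖u j'‖)
          (fun j' => le_add_of_nonneg_right (norm_nonneg (u j'))) j
      calc s ≤ ∑ _j : Fin (n + 1), ∏ j', (1 + ‖u j'‖) := Finset.sum_le_sum fun j _ => hle j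
        _ = ((n:ℝ) + 1) * ∏ j', (1 + ‖u j'‖) := by
            rw [Finset.sum_const, Finset.card_univ, Fintype.card_fin, nsmul_eq_mul]
            push_cast; ring
    have hprod1 : (1:ℝ) ≤ ∏ j', (1 + ‖u j'‖) :=
      one_le_prod_real (fun j' : Fin (n + 1) => 1 + ‖u j'‖)
        fun j' => le_add_of_nonneg_right (norm_nonneg (u j'))
    have hsM : s ^ (2 * M) ≤ ((n:ℝ) + 1) ^ (2 * M) * ∏ j, (1 + ‖u j‖) ^ (2 * M) := by
      calc s ^ (2 * M) ≤ (((n:ℝ) + 1) * ∏ j, (1 + ‖u j‖)) ^ (2 * M) :=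
            pow_le_pow_left₀ hs0 hsprod (2 * M)
        _ = ((n:ℝ) + 1) ^ (2 * M) * (∏ j, (1 + ‖u j‖)) ^ (2 * M) := mul_pow _ _ _
        _ = ((n:ℝ) + 1) ^ (2 * M) * ∏ j, (1 + ‖u j‖) ^ (2 * M) := by
            rw [← Finset.prod_pow]
    have hK2 : (0:ℝ) ≤ K1 ^ 2 := sq_nonneg _
    calc H u ≤ K1 ^ 2 * s ^ (2 * M) := hHu
      _ ≤ K1 ^ 2 * (((n:ℝ) + 1) ^ (2 * M) * ∏ j, (1 + ‖u j‖) ^ (2 * M)) :=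
          mul_le_mul_of_nonneg_left hsM hK2
      _ = (K1 ^ 2 * ((n:ℝ) + 1) ^ (2 * M)) * ∏ j, (1 + ‖u j‖) ^ (2 * M) := by ring
  -- integrability of H
  have hf1 : Integrable (fun x : Fin D → ℝ => (1 + ‖x‖) ^ (2 * M)) μ := by
    have hbound : Integrable (fun x : Fin D → ℝ => (2:ℝ) ^ (2 * M) * (1 + ‖x‖ ^ (2 * M))) μ :=
      (((integrable_const (1:ℝ)).add (hmom (2 * M))).const_mul _)
    apply Integrable.mono' hbound
    · exact ((continuous_const.add continuous_norm).pow (2 * M)).aestronglyMeasurable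
    · apply ae_of_all
      intro x
      rw [Real.norm_eq_abs, abs_of_nonneg (by positivity)]
      exact one_add_pow_le ‖x‖ (norm_nonneg x) (2 * M)
  have hprodint : Integrable (fun u : Fin (n + 1) → Fin D → ℝ =>
      ∏ j, (1 + ‖u j‖) ^ (2 * M)) π := integrable_prod_pi μ hf1
  have hφint : Integrable (fun u : Fin (n + 1) → Fin D → ℝ =>
      (K1 ^ 2 * ((n:ℝ) + 1) ^ (2 * M)) * ∏ j, (1 + ‖u j‖) ^ (2 * M)) π :=
    hprodint.const_mul _
  have hHint : Integrable H π := by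
    apply Integrable.mono' hφint hHm.aestronglyMeasurable
    apply ae_of_all
    intro u
    rw [Real.norm_eq_abs, abs_of_nonneg (by rw [hH]; exact sq_nonneg _)]
    exact hHb u
  -- Fubini
  set e := MeasurableEquiv.piFinSuccAbove (fun _ : Fin (n + 1) => (Fin D → ℝ)) (Fin.last n)
    with he
  have hmp := measurePreserving_piFinSuccAbove (fun _ : Fin (n + 1) => μ) (Fin.last n)
  set F : (Fin D → ℝ) × (Fin n → Fin D → ℝ) → ℝ := fun p => (p.1 ⬝ᵥ B p.2 + g p.1) ^ 2 with hF
  have hFe : ∀ u, F (e u) = H u := by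
    intro u
    rw [hF, hH]
    simp only
    have h1 : (e u).1 = u (Fin.last n) := rfl
    have h2 : (e u).2 = fun j => u j.castSucc := by
      funext j
      show u ((Fin.last n).succAbove j) = u j.castSucc
      rw [Fin.succAbove_last]
    rw [h1, h2]
  have hFint : Integrable F (μ.prod ν) := by
    have h1 : Integrable (F ∘ e) π := by
      have : F ∘ e = H := funext hFe
      rw [this]; exact hHint
    exact (hmp.integrable_comp_emb e.measurableEmbedding).mp h1
  have hI1 : ∫ u, H u ∂π = ∫ p, F p ∂(μ.prod ν) := by
    calc ∫ u, H u ∂π = ∫ u, F (e u) ∂π := by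
          apply integral_congr_ae; apply ae_of_all; intro u; exact (hFe u).symm
      _ = ∫ p, F p ∂(μ.prod ν) := hmp.integral_comp' F
  have hI2 : ∫ p, F p ∂(μ.prod ν) = ∫ w, ∫ x, F (x, w) ∂μ ∂ν := integral_prod_symm F hFint
  have hBdd : BddBelow (Set.range fun β : Fin D → ℝ => ∫ x, (x ⬝ᵥ β + g x) ^ 2 ∂μ) := by
    refine ⟨0, ?_⟩
    rintro y ⟨β, rfl⟩
    exact integral_nonneg fun x => sq_nonneg _
  have hinner : ∀ w, (⨅ β : Fin D → ℝ, ∫ x, (x ⬝ᵥ β + g x) ^ 2 ∂μ) ≤ ∫ x, F (x, w) ∂μ := by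
    intro w
    have h1 : (fun x => F (x, w)) = fun x => (x ⬝ᵥ B w + g x) ^ 2 := rfl
    rw [h1]
    exact ciInf_le hBdd (B w)
  have hinner_int : Integrable (fun w => ∫ x, F (x, w) ∂μ) ν := hFint.integral_prod_right
  have hstep : (⨅ β : Fin D → ℝ, ∫ x, (x ⬝ᵥ β + g x) ^ 2 ∂μ)
      ≤ ∫ w, ∫ x, F (x, w) ∂μ ∂ν := by
    have h0 : (⨅ β : Fin D → ℝ, ∫ x, (x ⬝ᵥ β + g x) ^ 2 ∂μ)
        = ∫ _w, (⨅ β : Fin D → ℝ, ∫ x, (x ⬝ᵥ β + g x) ^ 2 ∂μ) ∂ν := by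
      rw [integral_const]
      simp [measure_univ]
    rw [h0]
    exact integral_mono (integrable_const _) hinner_int hinner
  -- identify the LHS
  have hmarg : ∀ β : Fin D → ℝ,
      (∫ u, (u (Fin.last n) ⬝ᵥ β + g (u (Fin.last n))) ^ 2 ∂π)
        = ∫ x, (x ⬝ᵥ β + g x) ^ 2 ∂μ := by
    intro β
    have hmapeq : Measure.map (fun u : Fin (n + 1) → Fin D → ℝ => u (Fin.last n)) π = μ := by
      have hcomp : (fun u : Fin (n + 1) → Fin D → ℝ => u (Fin.last n)) = Prod.fst ∘ e := rfl
      rw [hcomp, ← Measure.map_map measurable_fst e.measurable, hmp.map_eq,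
        Measure.map_fst_prod]
      simp [measure_univ]
    have hfm : Measurable fun x : Fin D → ℝ => (x ⬝ᵥ β + g x) ^ 2 := by
      have hd : Measurable fun x : Fin D → ℝ => x ⬝ᵥ β :=
        Finset.measurable_sum _ fun i _ => (measurable_pi_apply i).mul measurable_const
      exact (hd.add hg).pow_const 2
    have h1 := integral_map (f := fun x : Fin D → ℝ => (x ⬝ᵥ β + g x) ^ 2)
      ((measurable_pi_apply (Fin.last n)).aemeasurable (μ := π))
      (by rw [hmapeq]; exact hfm.aestronglyMeasurable)
    rw [hmapeq] at h1
    exact h1.symm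
  have hLHS : (⨅ β : Fin D → ℝ, ∫ u, (u (Fin.last n) ⬝ᵥ β + g (u (Fin.last n))) ^ 2 ∂π)
      = ⨅ β : Fin D → ℝ, ∫ x, (x ⬝ᵥ β + g x) ^ 2 ∂μ := iInf_congr hmarg
  calc (⨅ β : Fin D → ℝ, ∫ u, (u (Fin.last n) ⬝ᵥ β + g (u (Fin.last n))) ^ 2 ∂π)
      = ⨅ β : Fin D → ℝ, ∫ x, (x ⬝ᵥ β + g x) ^ 2 ∂μ := hLHS
    _ ≤ ∫ w, ∫ x, F (x, w) ∂μ ∂ν := hstep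
    _ = ∫ p, F p ∂(μ.prod ν) := hI2.symm
    _ = ∫ u, H u ∂π := hI1.symm
    _ = ∫ u, (TFlin D n l (promptU D n u fun i => g (u i.castSucc))
        (Fin.last D) (Fin.last n) + g (u (Fin.last n))) ^ 2 ∂π := hRHS.symm
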